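/- For every λ > 0, the number β̄ = −log(2λ²) + log(1 + sqrt(1 + 4λ⁴) + sqrt(2 + 2 sqrt(1 + 4λ⁴))) is strictly positive and satisfies cosh(β̄) = λ² (cosh(β̄)² − 1), equivalently tanh(β̄) · λ · sqrt(cosh(β̄)) = 1. -/
import Mathlib


set_option maxHeartbeats 1000000 in
/-- for every `λ > 0`, the number
`β̄ = −log(2λ²) + log(1 + √(1+4λ⁴) + √(2 + 2√(1+4λ⁴)))` is strictly positive and satisfies
`cosh β̄ = λ²(cosh²β̄ − 1)`, equivalently `tanh β̄ · λ √(cosh β̄) = 1`. -/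
theorem poisson_annealed_critical_value (lam βb : ℝ) (hlam : 0 < lam)
    (hβb : βb = -Real.log (2 * lam^2)
      + Real.log (1 + Real.sqrt (1 + 4 * lam^4)
          + Real.sqrt (2 + 2 * Real.sqrt (1 + 4 * lam^4)))) :
    0 < βb ∧ Real.cosh βb = lam^2 * ((Real.cosh βb)^2 - 1) ∧
      Real.tanh βb * (lam * Real.sqrt (Real.cosh βb)) = 1 := by
  have hl2 : (0:ℝ) < 2 * lam^2 := by positivity
  set s := Real.sqrt (1 + 4 * lam^4) with hs
  have hs0 : 0 ≤ s := Real.sqrt_nonneg _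
  have hs2 : s^2 = 1 + 4*lam^4 := Real.sq_sqrt (by positivity)
  set t := Real.sqrt (2 + 2*s) with ht
  have ht0 : 0 < t := Real.sqrt_pos.mpr (by linarith)
  have ht2 : t^2 = 2 + 2*s := Real.sq_sqrt (by linarith)
  have hA : 0 < 1 + s + t := by linarith
  have hexp : Real.exp βb = (1 + s + t) / (2*lam^2) := by
    rw [hβb, Real.exp_add, Real.exp_neg, Real.exp_log hl2, Real.exp_log hA]
    ring
  have hAgt : 2 * lam^2 < 1 + s + t := by
    nlinarith [sq_nonneg (s - (2*lam^2 - 1))]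
  have hβpos : 0 < βb := by
    have : Real.exp 0 < Real.exp βb := by
      rw [Real.exp_zero, hexp]
      rw [lt_div_iff₀ hl2]; linarith
    exact Real.exp_lt_exp.mp this
  have hcosh : Real.cosh βb = (1 + s) / (2*lam^2) := by
    rw [Real.cosh_eq, hexp, Real.exp_neg, hexp, inv_div]
    field_simp
    nlinarith [hs2, ht2]
  have heq : Real.cosh βb = lam^2 * ((Real.cosh βb)^2 - 1) := by
    rw [hcosh]
    field_simp
    nlinarith [hs2]
  refine ⟨hβpos, heq, ?_⟩
  have hc1 : 0 < Real.cosh βb := Real.cosh_pos βb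
  have hsinh : 0 < Real.sinh βb := Real.sinh_pos_iff.mpr hβpos
  have htanh : 0 < Real.tanh βb := by
    rw [Real.tanh_eq_sinh_div_cosh]; positivity
  have hsq : 0 < Real.sqrt (Real.cosh βb) := Real.sqrt_pos.mpr hc1
  have hP : 0 < Real.tanh βb * (lam * Real.sqrt (Real.cosh βb)) := by positivity
  have hsq2 : (Real.tanh βb * (lam * Real.sqrt (Real.cosh βb)))^2 = 1 := by
    have h1 : (Real.sqrt (Real.cosh βb))^2 = Real.cosh βb := Real.sq_sqrt hc1.le
    have h2 : (Real.sinh βb)^2 = (Real.cosh βb)^2 - 1 := by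
      have := Real.cosh_sq βb; linarith
    rw [Real.tanh_eq_sinh_div_cosh, mul_pow, div_pow, mul_pow, h1, h2]
    field_simp
    nlinarith [heq, hc1]
  nlinarith [hP, hsq2]
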